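/- The Catalan matroid C_n is self-dual: the map x ↦ 2n + 1 − x on {1,…,2n} is an isomorphism from C_n to its dual matroid C_n*; equivalently, B is a basis of C_n if and only if {2n+1−c : c ∈ {1,…,2n} \ B} is a basis of C_n. -/
import Mathlib


/-- Height of the path with up-step set `A` after `x` steps: `2·|A ∩ {1,…,x}| − x`. -/
def ht (A : Finset ℕ) (x : ℕ) : ℤ := 2 * (A ∩ Finset.Icc 1 x).card - x

/-- `P` is the up-step set of a Dyck path of length `2n`. -/
def IsDyck (n : ℕ) (P : Finset ℕ) : Prop :=
  P ⊆ Finset.Icc 1 (2 * n) ∧ P.card = n ∧ ∀ x ≤ 2 * n, 0 ≤ ht P x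

lemma refl_inter_eq (n x : ℕ) (B : Finset ℕ) (hx : x ≤ 2 * n) :
    ((Finset.Icc 1 (2 * n) \ B).image (fun c => 2 * n + 1 - c)) ∩ Finset.Icc 1 x
      = (Finset.Icc (2 * n + 1 - x) (2 * n) \ B).image (fun c => 2 * n + 1 - c) := by
  ext a
  simp only [Finset.mem_inter, Finset.mem_image, Finset.mem_sdiff, Finset.mem_Icc]
  constructor
  · rintro ⟨⟨c, ⟨hc, hcB⟩, rfl⟩, ha⟩
    exact ⟨c, ⟨⟨by omega, by omega⟩, hcB⟩, rfl⟩
  · rintro ⟨c, ⟨hc, hcB⟩, rfl⟩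
    exact ⟨⟨c, ⟨⟨by omega, hc.2⟩, hcB⟩, rfl⟩, by omega⟩

lemma refl_injOn (n : ℕ) (s : Finset ℕ) (hs : s ⊆ Finset.Icc 1 (2 * n)) :
    Set.InjOn (fun c => 2 * n + 1 - c) s := by
  intro a ha b hb hab
  have h1 := hs ha; have h2 := hs hb
  simp only [Finset.mem_Icc] at h1 h2
  simp only at hab
  omega

lemma card_refl_inter (n x : ℕ) (B : Finset ℕ) (hx : x ≤ 2 * n) :
    (((Finset.Icc 1 (2 * n) \ B).image (fun c => 2 * n + 1 - c)) ∩ Finset.Icc 1 x).card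
      + (B ∩ Finset.Icc (2 * n + 1 - x) (2 * n)).card = x := by
  rw [refl_inter_eq n x B hx]
  rw [Finset.card_image_of_injOn (refl_injOn n _ (by
    intro a ha; simp only [Finset.mem_sdiff, Finset.mem_Icc] at ha ⊢; omega))]
  have h := Finset.card_inter_add_card_sdiff (Finset.Icc (2 * n + 1 - x) (2 * n)) B
  rw [Nat.card_Icc] at h
  rw [Finset.inter_comm] at h
  omega

lemma card_split (n x : ℕ) (B : Finset ℕ) (hB : B ⊆ Finset.Icc 1 (2 * n)) (hx : x ≤ 2 * n) :
    (B ∩ Finset.Icc 1 (2 * n - x)).card + (B ∩ Finset.Icc (2 * n + 1 - x) (2 * n)).card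
      = B.card := by
  rw [← Finset.card_union_of_disjoint]
  · congr 1
    ext a
    have : a ∈ B → 1 ≤ a ∧ a ≤ 2 * n := by
      intro h; have := hB h; simpa [Finset.mem_Icc] using this
    simp only [Finset.mem_union, Finset.mem_inter, Finset.mem_Icc]
    constructor
    · rintro (⟨h, _⟩ | ⟨h, _⟩) <;> exact h
    · intro h
      have h2 := this h
      by_cases hle : a ≤ 2 * n - x
      · exact Or.inl ⟨h, by omega⟩
      · exact Or.inr ⟨h, by omega⟩
  · apply Finset.disjoint_left.mpr
    intro a ha hb
    simp only [Finset.mem_inter, Finset.mem_Icc] at ha hb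
    omega

lemma isDyck_reflect (n : ℕ) (B : Finset ℕ) (h : IsDyck n B) :
    IsDyck n ((Finset.Icc 1 (2 * n) \ B).image (fun c => 2 * n + 1 - c)) := by
  obtain ⟨hsub, hcard, hht⟩ := h
  refine ⟨?_, ?_, ?_⟩
  · intro a ha
    simp only [Finset.mem_image, Finset.mem_sdiff, Finset.mem_Icc] at ha
    obtain ⟨c, ⟨⟨h1, h2⟩, _⟩, rfl⟩ := ha
    simp only [Finset.mem_Icc]; omega
  · rw [Finset.card_image_of_injOn (refl_injOn n _ (Finset.sdiff_subset)),
      Finset.card_sdiff_of_subset hsub, Nat.card_Icc, hcard]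
    omega
  · intro x hx
    have h1 := card_refl_inter n x B hx
    have h2 := card_split n x B hsub hx
    have h3 := hht (2 * n - x) (by omega)
    unfold ht at h3 ⊢
    rw [hcard] at h2
    have hx2 : ((2 * n - x : ℕ) : ℤ) = 2 * n - x := by push_cast; omega
    rw [hx2] at h3
    push_cast at h3 ⊢
    omega

lemma refl_refl (n : ℕ) (B : Finset ℕ) (hB : B ⊆ Finset.Icc 1 (2 * n)) :
    ((Finset.Icc 1 (2 * n) \
      ((Finset.Icc 1 (2 * n) \ B).image (fun c => 2 * n + 1 - c))).image
        (fun c => 2 * n + 1 - c)) = B := by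
  have hcompl : Finset.Icc 1 (2 * n) \
      ((Finset.Icc 1 (2 * n) \ B).image (fun c => 2 * n + 1 - c))
      = B.image (fun c => 2 * n + 1 - c) := by
    ext a
    simp only [Finset.mem_sdiff, Finset.mem_image, Finset.mem_Icc, not_exists]
    constructor
    · rintro ⟨⟨h1, h2⟩, h3⟩
      refine ⟨2 * n + 1 - a, ?_, by omega⟩
      by_contra hc
      exact h3 (2 * n + 1 - a) ⟨⟨by omega, hc⟩, by omega⟩
    · rintro ⟨c, hc, rfl⟩
      have hc2 := hB hc
      simp only [Finset.mem_Icc] at hc2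
      refine ⟨⟨by omega, by omega⟩, ?_⟩
      rintro d ⟨⟨hd, hdB⟩, hde⟩
      have : d = c := by omega
      exact hdB (this ▸ hc)
  rw [hcompl, Finset.image_image]
  ext a
  simp only [Finset.mem_image, Function.comp_apply]
  constructor
  · rintro ⟨c, hc, rfl⟩
    have hc2 := hB hc
    simp only [Finset.mem_Icc] at hc2
    have he : 2 * n + 1 - (2 * n + 1 - c) = c := by omega
    rwa [he]
  · intro ha
    have h2 := hB ha
    simp only [Finset.mem_Icc] at h2
    exact ⟨a, ha, by omega⟩

/-- The Catalan matroid is self-dual: `B` is a basis if and only if the image of its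
complement under the reflection `x ↦ 2n + 1 − x` is a basis.  (The bases of the dual
matroid are the complements of bases, so this says `x ↦ 2n + 1 − x` is an isomorphism
from the Catalan matroid to its dual.) -/
theorem catalan_self_dual (n : ℕ) (hn : 0 < n) (B : Finset ℕ)
    (hB : B ⊆ Finset.Icc 1 (2 * n)) :
    IsDyck n B ↔
      IsDyck n ((Finset.Icc 1 (2 * n) \ B).image (fun c => 2 * n + 1 - c)) := by
  constructor
  · exact isDyck_reflect n B
  · intro h
    have := isDyck_reflect n _ h
    rwa [refl_refl n B hB] at this
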